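/- arXiv:1509.07803 — 4 statements merged into one kernel-verified Lean document; each statement's English description precedes it below -/
import Mathlib

section
/- Let A be a commutative ℂ-algebra equipped with a ℤ-grading 𝒜 making it a graded ℂ-algebra, let m be a nonzero integer, and let f ∈ A be homogeneous of degree m. Let ℓ, ℓ' ≥ 1 be integers such that ℓ' ≡ ℓ (mod m) or ℓ' ≡ −ℓ (mod m). Then the ℂ-algebras R_{f,ℓ} and R_{f,ℓ'} are isomorphic. -/
open LaurentPolynomial

section LaurentTwistAux

variable {A : Type*} [CommRing A] [Algebra ℂ A]
variable (𝒜 : ℤ → Submodule ℂ A) [GradedAlgebra 𝒜]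

/-- On the homogeneous piece of degree `d`, the map `a ↦ T^(k*d) * C a`. -/
noncomputable def twistFun (k d : ℤ) : 𝒜 d →ₗ[ℂ] LaurentPolynomial A where
  toFun x := T (k * d) * C (x : A)
  map_add' x y := by
    simp [mul_add]
  map_smul' c x := by
    simp only [SetLike.val_smul, RingHom.id_apply, Algebra.smul_def, map_mul,
      LaurentPolynomial.algebraMap_apply]
    ring

/-- The `k`-th twist `A →ₐ[ℂ] A[T,T⁻¹]`, sending a homogeneous `a` of degree `d`
to `T^(k*d) * C a`. -/
noncomputable def twistA (k : ℤ) : A →ₐ[ℂ] LaurentPolynomial A :=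
  (DirectSum.toAlgebra ℂ _ (twistFun 𝒜 k)
      (by
        simp only [twistFun, LinearMap.coe_mk, AddHom.coe_mk, SetLike.coe_gOne, map_one,
          mul_zero, T_zero, mul_one])
      (by
        intro i j ai aj
        simp only [twistFun, LinearMap.coe_mk, AddHom.coe_mk, SetLike.coe_gMul, map_mul]
        rw [mul_add k i j, T_add]
        ring)).comp (DirectSum.decomposeAlgEquiv 𝒜).toAlgHom

theorem twistA_of_mem (k : ℤ) {d : ℤ} {a : A} (ha : a ∈ 𝒜 d) :
    twistA 𝒜 k a = T (k * d) * C a := by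
  unfold twistA
  simp only [AlgHom.coe_comp, Function.comp_apply, AlgEquiv.toAlgHom_eq_coe, AlgHom.coe_coe,
    DirectSum.decomposeAlgEquiv_apply]
  change DirectSum.toAddMonoid (fun i => (twistFun 𝒜 k i).toAddMonoidHom)
      (DirectSum.decompose 𝒜 a) = T (k * d) * C a
  rw [DirectSum.decompose_of_mem 𝒜 ha]
  show DirectSum.toAddMonoid (fun i => (twistFun 𝒜 k i).toAddMonoidHom)
      ((DirectSum.of (fun i => 𝒜 i) d) ⟨a, ha⟩) = T (k * d) * C a
  rw [DirectSum.toAddMonoid_of]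
  rfl

theorem twistA_zero (a : A) : twistA 𝒜 0 a = C a := by
  induction a using DirectSum.Decomposition.inductionOn 𝒜 with
  | zero => simp
  | homogeneous x =>
      rename_i i
      rw [twistA_of_mem 𝒜 0 x.2, zero_mul, T_zero, one_mul]
  | add x y hx hy => rw [map_add, hx, hy, map_add]

/-- The monoid hom `Multiplicative ℤ →* A[T,T⁻¹]`, `n ↦ T n`. -/
noncomputable def Tmon : Multiplicative ℤ →* LaurentPolynomial A where
  toFun n := T (Multiplicative.toAdd n)
  map_one' := by
    show (T (Multiplicative.toAdd (1 : Multiplicative ℤ)) : LaurentPolynomial A) = 1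
    rw [toAdd_one, T_zero]
  map_mul' x y := by
    show (T (Multiplicative.toAdd (x * y)) : LaurentPolynomial A) = _
    rw [toAdd_mul, T_add]

/-- The `k`-th twist ring endomorphism of `A[T,T⁻¹]`. -/
noncomputable def twistRH (k : ℤ) : LaurentPolynomial A →+* LaurentPolynomial A :=
  AddMonoidAlgebra.liftNCRingHom (twistA 𝒜 k).toRingHom Tmon (fun _ _ => Commute.all _ _)

theorem twistRH_single (k n : ℤ) (a : A) :
    twistRH 𝒜 k (AddMonoidAlgebra.single n a) = twistA 𝒜 k a * T n := by
  show AddMonoidAlgebra.liftNC ((twistA 𝒜 k).toRingHom : A →+ LaurentPolynomial A) ⇑Tmon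
      (AddMonoidAlgebra.single n a) = _
  erw [AddMonoidAlgebra.liftNC_single]
  rfl

/-- The `k`-th twist endomorphism of `A[T,T⁻¹]` as a `ℂ`-algebra hom: `T ↦ T`,
`C a ↦ T^(k*d) * C a` for `a` homogeneous of degree `d`. -/
noncomputable def twistL (k : ℤ) : LaurentPolynomial A →ₐ[ℂ] LaurentPolynomial A :=
  { twistRH 𝒜 k with
    commutes' := fun c => by
      show twistRH 𝒜 k (algebraMap ℂ (LaurentPolynomial A) c) = _
      have : (algebraMap ℂ (LaurentPolynomial A)) c = AddMonoidAlgebra.single (0 : ℤ)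
          ((algebraMap ℂ A) c) := by
        rw [LaurentPolynomial.algebraMap_apply]
        show _ = (AddMonoidAlgebra.single (0:ℤ) ((algebraMap ℂ A) c) : LaurentPolynomial A)
        rw [single_eq_C_mul_T, T_zero, mul_one]
      rw [this, twistRH_single, T_zero, mul_one, AlgHom.commutes]
      exact this.symm }

theorem twistL_C (k : ℤ) (a : A) : twistL 𝒜 k (C a) = twistA 𝒜 k a := by
  show twistRH 𝒜 k (AddMonoidAlgebra.single (0 : ℤ) a) = _
  rw [twistRH_single, T_zero, mul_one]

theorem twistL_T (k n : ℤ) : twistL 𝒜 k (T n) = T n := by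
  show twistRH 𝒜 k (AddMonoidAlgebra.single n (1 : A)) = _
  rw [twistRH_single, map_one, one_mul]

theorem twistL_comp (k k' : ℤ) (a : A) :
    twistL 𝒜 k (twistA 𝒜 k' a) = twistA 𝒜 (k + k') a := by
  induction a using DirectSum.Decomposition.inductionOn 𝒜 with
  | zero => simp
  | homogeneous x =>
      rename_i i
      rw [twistA_of_mem 𝒜 k' x.2, twistA_of_mem 𝒜 (k + k') x.2, map_mul, twistL_T,
        twistL_C, twistA_of_mem 𝒜 k x.2, ← mul_assoc, ← T_add]
      ring_nf
  | add x y hx hy => rw [map_add, map_add, map_add, hx, hy]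

theorem twistL_twistL (k : ℤ) :
    (twistL 𝒜 k).comp (twistL 𝒜 (-k)) = AlgHom.id ℂ (LaurentPolynomial A) := by
  have h : ((twistL 𝒜 k).comp (twistL 𝒜 (-k)) : LaurentPolynomial A →+* LaurentPolynomial A)
      = (AlgHom.id ℂ (LaurentPolynomial A) : LaurentPolynomial A →+* LaurentPolynomial A) := by
    apply AddMonoidAlgebra.ringHom_ext
    · intro b
      show (twistL 𝒜 k) ((twistL 𝒜 (-k)) (C b)) = C b
      rw [twistL_C, twistL_comp, add_neg_cancel, twistA_zero]
    · intro a
      show (twistL 𝒜 k) ((twistL 𝒜 (-k)) (T a)) = T a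
      rw [twistL_T, twistL_T]
  exact AlgHom.ext fun x => RingHom.congr_fun h x

/-- The `k`-th twist as a `ℂ`-algebra automorphism of `A[T,T⁻¹]`. -/
noncomputable def twistE (k : ℤ) : LaurentPolynomial A ≃ₐ[ℂ] LaurentPolynomial A :=
  AlgEquiv.ofAlgHom (twistL 𝒜 k) (twistL 𝒜 (-k)) (twistL_twistL 𝒜 k)
    (by simpa using twistL_twistL 𝒜 (-k))

theorem twistE_apply (k : ℤ) (x : LaurentPolynomial A) : twistE 𝒜 k x = twistL 𝒜 k x := rfl

/-- Transporting an ideal generated by one element along an automorphism. -/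
theorem quot_iso_of_auto {x y : LaurentPolynomial A}
    (E : LaurentPolynomial A ≃ₐ[ℂ] LaurentPolynomial A) (hE : E x = y) :
    Nonempty ((LaurentPolynomial A ⧸ Ideal.span {x}) ≃ₐ[ℂ]
      (LaurentPolynomial A ⧸ Ideal.span {y})) :=
  ⟨Ideal.quotientEquivAlg _ _ E (by
    rw [Ideal.map_span, Set.image_singleton,
      show ((E : LaurentPolynomial A →+* LaurentPolynomial A) x) = y from hE])⟩

end LaurentTwistAux

/-- **Proposition 1(1).** Let `A` be a commutative `ℂ`-algebra with a `ℤ`-grading `𝒜`,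
let `m ≠ 0` and let `f ∈ A` be homogeneous of degree `m`.  If `ℓ, ℓ' ≥ 1` satisfy
`ℓ' ≡ ℓ (mod m)` or `ℓ' ≡ -ℓ (mod m)`, then the coordinate rings
`R_{f,ℓ} = A[T,T⁻¹]/(T^ℓ f - 1)` and `R_{f,ℓ'} = A[T,T⁻¹]/(T^ℓ' f - 1)` are
isomorphic as `ℂ`-algebras. -/
theorem laurent_hypersurfaces_iso_of_cong {A : Type*} [CommRing A] [Algebra ℂ A]
    (𝒜 : ℤ → Submodule ℂ A) [GradedAlgebra 𝒜]
    (m : ℤ) (hm : m ≠ 0) (f : A) (hf : f ∈ 𝒜 m)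
    (ℓ ℓ' : ℤ) (hℓ : 1 ≤ ℓ) (hℓ' : 1 ≤ ℓ')
    (hcong : ℓ' ≡ ℓ [ZMOD m] ∨ ℓ' ≡ -ℓ [ZMOD m]) :
    Nonempty ((LaurentPolynomial A ⧸ Ideal.span {T ℓ * C f - 1}) ≃ₐ[ℂ]
      (LaurentPolynomial A ⧸ Ideal.span {T ℓ' * C f - 1})) := by
  rcases hcong with h | h
  · obtain ⟨k, hk⟩ : m ∣ ℓ' - ℓ := Int.ModEq.dvd h.symm
    refine quot_iso_of_auto (twistE 𝒜 k) ?_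
    rw [twistE_apply, map_sub, map_one, map_mul, twistL_T, twistL_C, twistA_of_mem 𝒜 k hf,
      ← mul_assoc, ← T_add]
    have hℓ'' : ℓ + k * m = ℓ' := by linear_combination -hk
    rw [hℓ'']
  · obtain ⟨k, hk⟩ : m ∣ -ℓ - ℓ' := Int.ModEq.dvd h
    refine quot_iso_of_auto
      ((AddMonoidAlgebra.domCongr ℂ A (AddEquiv.neg ℤ)).trans (twistE 𝒜 (-k))) ?_
    have h1 : (AddMonoidAlgebra.domCongr ℂ A (AddEquiv.neg ℤ)) (T ℓ * C f - 1)
        = T (-ℓ) * C f - 1 := by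
      have hT : (T ℓ * C f : LaurentPolynomial A) = AddMonoidAlgebra.single ℓ f := by
        rw [mul_comm, ← single_eq_C_mul_T]
      have hT' : (T (-ℓ) * C f : LaurentPolynomial A) = AddMonoidAlgebra.single (-ℓ) f := by
        rw [mul_comm, ← single_eq_C_mul_T]
      rw [map_sub, map_one, hT, hT', AddMonoidAlgebra.domCongr_single]
      rfl
    rw [AlgEquiv.trans_apply, h1, twistE_apply, map_sub, map_one, map_mul, twistL_T, twistL_C,
      twistA_of_mem 𝒜 (-k) hf, ← mul_assoc, ← T_add]
    have hℓ'' : -ℓ + -k * m = ℓ' := by linear_combination hk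
    rw [hℓ'']
end

section
/- Let n ≥ 1, m ≥ 2 and ℓ ≥ 1 be integers, and let R_{n,m,ℓ} = ℂ[x₁,…,xₙ,y,z,t]/(t^ℓ(x₁²⋯xₙ²·z − y^m) − 1). Then R_{n,m,ℓ} is a smooth ℂ-algebra (i.e. Algebra.Smooth ℂ R_{n,m,ℓ}: it is of finite presentation and formally smooth over ℂ). -/
section AuxAdjoinRoot
open Polynomial

universe u
theorem formallySmooth_adjoinRoot {A : Type u} [CommRing A] (P : A[X])
    (hP : IsUnit (aeval (AdjoinRoot.root P) (derivative P))) :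
    Algebra.FormallySmooth A (AdjoinRoot P) := by
  apply Algebra.FormallySmooth.of_comp_surjective
  intro C _ _ I hI f
  obtain ⟨x, hx⟩ := Ideal.Quotient.mk_surjective (f (AdjoinRoot.root P))
  have haevalroot : aeval (AdjoinRoot.root P) P = 0 := by
    rw [aeval_def, AdjoinRoot.algebraMap_eq, AdjoinRoot.eval₂_root]
  have hmk : ∀ c : C, Ideal.Quotient.mkₐ A I c = Ideal.Quotient.mk I c := fun _ => rfl
  have hPx0 : aeval x P ∈ I := by
    rw [← Ideal.Quotient.eq_zero_iff_mem, ← hmk, ← aeval_algHom_apply, hmk, hx,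
      aeval_algHom_apply, haevalroot, map_zero]
  have hd : IsUnit (Ideal.Quotient.mk I (aeval x (derivative P))) := by
    have := hP.map f
    rw [← aeval_algHom_apply, ← hx, ← hmk] at this
    rwa [aeval_algHom_apply, hmk] at this
  obtain ⟨v, hv⟩ := Ideal.Quotient.mk_surjective (↑hd.unit⁻¹ : C ⧸ I)
  set d := aeval x (derivative P) with hd'
  have hiI : d * v - 1 ∈ I := by
    rw [← Ideal.Quotient.eq_zero_iff_mem, map_sub, map_mul, map_one, hv, IsUnit.mul_val_inv,
      sub_self]
  have hsq : ∀ a ∈ I, ∀ b ∈ I, a * b = 0 := by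
    intro a ha b hb
    rw [← Ideal.mem_bot, ← hI, pow_two]
    exact Ideal.mul_mem_mul ha hb
  have hdu : d * (v * (2 - d * v)) = 1 := by
    have h2 : (d * v - 1) * (d * v - 1) = 0 := hsq _ hiI _ hiI
    linear_combination -h2
  set ε := -(aeval x P * (v * (2 - d * v))) with hε
  have hεI : ε ∈ I := I.neg_mem (Ideal.mul_mem_right _ _ hPx0)
  have hroot : aeval (x + ε) P = 0 := by
    have hε2 : ε ^ 2 = 0 := by rw [pow_two]; exact hsq _ hεI _ hεI
    rw [← eval_map_algebraMap, Polynomial.eval_add_of_sq_eq_zero _ _ _ hε2, derivative_map,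
      eval_map_algebraMap, eval_map_algebraMap, hε]
    rw [← hd']
    linear_combination (-(aeval x P)) * hdu
  refine ⟨AdjoinRoot.liftAlgHom P (Algebra.ofId A C) (x + ε) (by rw [Algebra.toRingHom_ofId, ← aeval_def]; exact hroot), ?_⟩
  apply AdjoinRoot.algHom_ext
  rw [AlgHom.comp_apply, AdjoinRoot.liftAlgHom_root, hmk, map_add, hx,
    (Ideal.Quotient.eq_zero_iff_mem).mpr hεI, add_zero]

end AuxAdjoinRoot

open MvPolynomial

/-- `R_{n,m,ℓ} = ℂ[x₁,…,xₙ,y,z,t]/(t^ℓ(x₁²⋯xₙ²·z − y^m) − 1)`, the coordinate ring of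
the hypersurface `X_{n,m,ℓ} ⊂ 𝔸^{n+3}`; the variables `x₁,…,xₙ` are indexed by
`0,…,n-1`, `y` by `n`, `z` by `n+1` and `t` by `n+2` in `Fin (n+3)`. -/
noncomputable abbrev negKodairaRing (n m ℓ : ℕ) : Type :=
  MvPolynomial (Fin (n + 3)) ℂ ⧸ Ideal.span
    {(X (⟨n + 2, by omega⟩ : Fin (n + 3)) : MvPolynomial (Fin (n + 3)) ℂ) ^ ℓ *
      ((∏ i : Fin n, (X (Fin.castAdd 3 i)) ^ 2) * X (⟨n + 1, by omega⟩ : Fin (n + 3)) -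
        (X (⟨n, by omega⟩ : Fin (n + 3))) ^ m) - 1}

lemma negKodaira_key (n m ℓ : ℕ) :
    ((renameEquiv ℂ (finSuccEquivLast (n := n + 2))).trans (optionEquivLeft ℂ (Fin (n + 2))))
      ((X (⟨n + 2, by omega⟩ : Fin (n + 3)) : MvPolynomial (Fin (n + 3)) ℂ) ^ ℓ *
        ((∏ i : Fin n, (X (Fin.castAdd 3 i)) ^ 2) * X (⟨n + 1, by omega⟩ : Fin (n + 3)) -
          (X (⟨n, by omega⟩ : Fin (n + 3))) ^ m) - 1) =
    Polynomial.X ^ ℓ * Polynomial.C ((∏ i : Fin n, X (Fin.castAdd 2 i) ^ 2) *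
      X (⟨n + 1, by omega⟩ : Fin (n + 2)) - X (⟨n, by omega⟩ : Fin (n + 2)) ^ m) - 1 := by
  have hlast : (⟨n + 2, by omega⟩ : Fin (n + 3)) = Fin.last (n + 2) := rfl
  have hc1 : (⟨n + 1, by omega⟩ : Fin (n + 3)) = Fin.castSucc (⟨n + 1, by omega⟩ : Fin (n + 2)) := rfl
  have hc0 : (⟨n, by omega⟩ : Fin (n + 3)) = Fin.castSucc (⟨n, by omega⟩ : Fin (n + 2)) := rfl
  have hcc : ∀ i : Fin n, Fin.castAdd 3 i = Fin.castSucc (Fin.castAdd 2 i) := fun i => rfl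
  simp only [map_sub, map_mul, map_pow, map_one, map_prod, AlgEquiv.trans_apply,
    renameEquiv_apply, rename_X, hlast, hc1, hc0, hcc, finSuccEquivLast_last,
    finSuccEquivLast_castSucc, optionEquivLeft_X_none, optionEquivLeft_X_some]

/-- **Lemma (smoothness).** For all `n ≥ 1`, `m ≥ 2`, `ℓ ≥ 1`, the hypersurface
`X_{n,m,ℓ} = {t^ℓ(x₁²⋯xₙ²·z − y^m) = 1} ⊂ 𝔸^{n+3}` is smooth, i.e. its coordinate ring
`R_{n,m,ℓ}` is a smooth `ℂ`-algebra. -/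
theorem negKodairaRing_smooth (n m ℓ : ℕ) (hn : 1 ≤ n) (hm : 2 ≤ m) (hℓ : 1 ≤ ℓ) :
    Algebra.Smooth ℂ (negKodairaRing n m ℓ) := by
  obtain ⟨f, hf⟩ : ∃ f : MvPolynomial (Fin (n + 2)) ℂ, f =
      (∏ i : Fin n, X (Fin.castAdd 2 i) ^ 2) * X (⟨n + 1, by omega⟩ : Fin (n + 2)) -
        X (⟨n, by omega⟩ : Fin (n + 2)) ^ m := ⟨_, rfl⟩
  obtain ⟨P, hP⟩ : ∃ P : Polynomial (MvPolynomial (Fin (n + 2)) ℂ),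
      P = Polynomial.X ^ ℓ * Polynomial.C f - 1 := ⟨_, rfl⟩
  set e : MvPolynomial (Fin (n + 3)) ℂ ≃ₐ[ℂ] Polynomial (MvPolynomial (Fin (n + 2)) ℂ) :=
    (renameEquiv ℂ (finSuccEquivLast (n := n + 2))).trans (optionEquivLeft ℂ (Fin (n + 2))) with he
  have hEg : e ((X (⟨n + 2, by omega⟩ : Fin (n + 3)) : MvPolynomial (Fin (n + 3)) ℂ) ^ ℓ *
      ((∏ i : Fin n, (X (Fin.castAdd 3 i)) ^ 2) * X (⟨n + 1, by omega⟩ : Fin (n + 3)) -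
        (X (⟨n, by omega⟩ : Fin (n + 3))) ^ m) - 1) = P := by
    rw [hP, hf]; exact negKodaira_key n m ℓ
  let e₂ : negKodairaRing n m ℓ ≃ₐ[ℂ] AdjoinRoot P :=
    Ideal.quotientEquivAlg _ (Ideal.span {P}) e
      (by rw [Ideal.map_span, Set.image_singleton]; exact congrArg _ (congrArg _ hEg.symm))
  have hrel : (AdjoinRoot.root P) ^ ℓ * algebraMap _ (AdjoinRoot P) f = 1 := by
    have h0 : Polynomial.aeval (AdjoinRoot.root P) P = 0 := by
      rw [Polynomial.aeval_def, AdjoinRoot.algebraMap_eq, AdjoinRoot.eval₂_root]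
    rw [hP, map_sub, map_mul, map_pow, Polynomial.aeval_X, Polynomial.aeval_C, map_one,
      sub_eq_zero] at h0
    rw [← hP] at h0
    exact h0
  have hℓ0 : ((ℓ : ℕ) : ℂ) ≠ 0 := Nat.cast_ne_zero.mpr (by omega)
  have hunit : IsUnit (Polynomial.aeval (AdjoinRoot.root P) (Polynomial.derivative P)) := by
    have hder : Polynomial.derivative P =
        Polynomial.C ((ℓ : MvPolynomial (Fin (n + 2)) ℂ)) * Polynomial.X ^ (ℓ - 1) *
          Polynomial.C f := by
      rw [hP, Polynomial.derivative_sub, Polynomial.derivative_one, Polynomial.derivative_mul,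
        Polynomial.derivative_X_pow, Polynomial.derivative_C]
      ring
    rw [hder, map_mul, map_mul, map_pow, Polynomial.aeval_C, Polynomial.aeval_C,
      Polynomial.aeval_X]
    have h1 : IsUnit (algebraMap (MvPolynomial (Fin (n + 2)) ℂ) (AdjoinRoot P)
        ((ℓ : MvPolynomial (Fin (n + 2)) ℂ))) := by
      refine IsUnit.of_mul_eq_one (algebraMap ℂ (AdjoinRoot P) ((ℓ : ℂ)⁻¹)) ?_
      rw [← map_natCast (algebraMap ℂ (MvPolynomial (Fin (n + 2)) ℂ)) ℓ,
        ← IsScalarTower.algebraMap_apply, ← map_mul, mul_inv_cancel₀ hℓ0, map_one]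
    rw [mul_assoc]
    refine h1.mul (IsUnit.of_mul_eq_one (AdjoinRoot.root P) ?_)
    rw [mul_right_comm, ← pow_succ, Nat.sub_add_cancel hℓ]
    exact hrel
  haveI : Algebra.FormallySmooth (MvPolynomial (Fin (n + 2)) ℂ) (AdjoinRoot P) :=
    formallySmooth_adjoinRoot P hunit
  haveI : Algebra.FinitePresentation (MvPolynomial (Fin (n + 2)) ℂ) (AdjoinRoot P) :=
    Algebra.FinitePresentation.quotient (Submodule.fg_span (Set.finite_singleton P))
  haveI : Algebra.Smooth ℂ (MvPolynomial (Fin (n + 2)) ℂ) :=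
    ⟨inferInstance, Algebra.FinitePresentation.mvPolynomial ℂ _ _⟩
  haveI : Algebra.Smooth (MvPolynomial (Fin (n + 2)) ℂ) (AdjoinRoot P) :=
    ⟨inferInstance, inferInstance⟩
  haveI : Algebra.Smooth ℂ (AdjoinRoot P) :=
    Algebra.Smooth.comp ℂ (MvPolynomial (Fin (n + 2)) ℂ) (AdjoinRoot P)
  exact Algebra.Smooth.of_equiv e₂.symm
end

section
/- Let n ≥ 1, let A = ℂ[x₁,…,xₙ] be the polynomial ring equipped with a ℤ-grading making it a graded ℂ-algebra, let m be a nonzero integer, and let f ∈ A be homogeneous of degree m. Suppose a, b ≥ 1 are integers satisfying a + b ≡ 0 (mod m) and a·b ≡ 1 (mod m²). Then the ℂ-algebras R_{f,1} ⊗_ℂ R_{f,1} and R_{f,a} ⊗_ℂ R_{f,a} are isomorphic. -/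
open LaurentPolynomial TensorProduct

/-- `R_{f,j} = A[T,T⁻¹]/(T^j·f − 1)` for `A = ℂ[x₁,…,xₙ]`, the coordinate ring of the
hypersurface `X̃_{f,j}` defined by `t^j f = 1`. -/
noncomputable def hypersurfaceRing (n : ℕ) (f : MvPolynomial (Fin n) ℂ) (j : ℤ) :
    Type :=
  LaurentPolynomial (MvPolynomial (Fin n) ℂ) ⧸ Ideal.span {T j * C f - 1}

noncomputable instance (n : ℕ) (f : MvPolynomial (Fin n) ℂ) (j : ℤ) :
    CommRing (hypersurfaceRing n f j) :=
  inferInstanceAs (CommRing (LaurentPolynomial (MvPolynomial (Fin n) ℂ) ⧸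
    Ideal.span {T j * C f - 1}))

noncomputable instance (n : ℕ) (f : MvPolynomial (Fin n) ℂ) (j : ℤ) :
    Algebra ℂ (hypersurfaceRing n f j) :=
  inferInstanceAs (Algebra ℂ (LaurentPolynomial (MvPolynomial (Fin n) ℂ) ⧸
    Ideal.span {T j * C f - 1}))

variable {n : ℕ}

noncomputable def tau : (LaurentPolynomial (MvPolynomial (Fin n) ℂ))ˣ :=
  ⟨T 1, T (-1), by rw [← T_add]; norm_num, by rw [← T_add]; norm_num⟩

lemma tau_zpow (e : ℤ) :
    ((tau (n := n) ^ e : _ˣ) : LaurentPolynomial (MvPolynomial (Fin n) ℂ)) = T e := by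
  induction e using Int.induction_on with
  | zero => simp [T_zero]
  | succ k ih => rw [zpow_add_one, Units.val_mul, ih]; show _ * (T 1 : _) = _; rw [← T_add]
  | pred k ih =>
      rw [zpow_sub_one, Units.val_mul, ih]
      show _ * (T (-1) : _) = _
      rw [← T_add, sub_eq_add_neg]

noncomputable def CAlg : MvPolynomial (Fin n) ℂ →ₐ[ℂ] LaurentPolynomial (MvPolynomial (Fin n) ℂ) :=
  { (LaurentPolynomial.C : _ →+* _) with
    commutes' := fun c => (LaurentPolynomial.algebraMap_apply c).symm }

variable {n : ℕ} (𝒜 : ℤ → Submodule ℂ (MvPolynomial (Fin n) ℂ)) [GradedAlgebra 𝒜]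
variable {B : Type*} [CommRing B] [Algebra ℂ B]

noncomputable def gradedTwist (ι : MvPolynomial (Fin n) ℂ →ₐ[ℂ] B) (w : Bˣ) :
    MvPolynomial (Fin n) ℂ →ₐ[ℂ] B :=
  (DirectSum.toAlgebra ℂ (fun i => 𝒜 i)
    (fun e => ((w ^ e : Bˣ) : B) • (ι.toLinearMap ∘ₗ (𝒜 e).subtype))
    (by simp [SetLike.coe_gOne])
    (by
      intro i j ai aj
      simp only [LinearMap.smul_apply, LinearMap.coe_comp, Function.comp_apply,
        Submodule.coe_subtype, SetLike.coe_gMul, AlgHom.toLinearMap_apply, map_mul, smul_eq_mul, zpow_add, Units.val_mul]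
      ring)).comp (DirectSum.decomposeAlgEquiv 𝒜).toAlgHom

lemma gradedTwist_apply (ι : MvPolynomial (Fin n) ℂ →ₐ[ℂ] B) (w : Bˣ) {e : ℤ}
    {g : MvPolynomial (Fin n) ℂ} (hg : g ∈ 𝒜 e) :
    gradedTwist 𝒜 ι w g = ι g * ((w ^ e : Bˣ) : B) := by
  unfold gradedTwist
  simp only [AlgHom.comp_apply, AlgEquiv.toAlgHom_eq_coe, AlgHom.coe_coe,
    DirectSum.decomposeAlgEquiv_apply]
  change (DirectSum.toAlgebra ℂ (fun i => 𝒜 i) _ _ _) (DirectSum.decompose 𝒜 g) = _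
  rw [DirectSum.decompose_of_mem 𝒜 hg]
  rw [DirectSum.toAlgebra_apply]
  erw [DirectSum.toSemiring_of]
  simp [smul_eq_mul, mul_comm]

variable {n : ℕ}
variable {B : Type*} [CommRing B] [Algebra ℂ B]

noncomputable def laurentHom (ι : MvPolynomial (Fin n) ℂ →ₐ[ℂ] B) (z : Bˣ) :
    LaurentPolynomial (MvPolynomial (Fin n) ℂ) →ₐ[ℂ] B :=
  { AddMonoidAlgebra.liftNCRingHom ι.toRingHom
      ((Units.coeHom B).comp (zpowersHom Bˣ z)) (fun _ _ => Commute.all _ _) with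
    commutes' := fun c => by
      have h : (algebraMap ℂ (LaurentPolynomial (MvPolynomial (Fin n) ℂ)) c)
          = C (algebraMap ℂ (MvPolynomial (Fin n) ℂ) c) := LaurentPolynomial.algebraMap_apply c
      show AddMonoidAlgebra.liftNC _ _ (algebraMap ℂ _ c) = _
      rw [h, ← single_eq_C, AddMonoidAlgebra.liftNC_single]
      simp }

lemma laurentHom_C (ι : MvPolynomial (Fin n) ℂ →ₐ[ℂ] B) (z : Bˣ)
    (g : MvPolynomial (Fin n) ℂ) : laurentHom ι z (C g) = ι g := by
  show AddMonoidAlgebra.liftNC _ _ (C g) = ι g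
  rw [← single_eq_C, AddMonoidAlgebra.liftNC_single]
  simp

lemma laurentHom_T (ι : MvPolynomial (Fin n) ℂ →ₐ[ℂ] B) (z : Bˣ)
    (e : ℤ) : laurentHom ι z (T e) = ((z ^ e : Bˣ) : B) := by
  show AddMonoidAlgebra.liftNC _ _ (AddMonoidAlgebra.single e 1) = _
  rw [AddMonoidAlgebra.liftNC_single]
  simp

variable (f : MvPolynomial (Fin n) ℂ)

noncomputable def mkR (j : ℤ) :
    LaurentPolynomial (MvPolynomial (Fin n) ℂ) →ₐ[ℂ] hypersurfaceRing n f j :=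
  Ideal.Quotient.mkₐ ℂ _

lemma mkR_rel (j : ℤ) : mkR f j (T j * C f) = 1 := by
  have : (T j * C f : LaurentPolynomial (MvPolynomial (Fin n) ℂ)) - 1
      ∈ Ideal.span {T j * C f - 1} := Ideal.subset_span rfl
  show Ideal.Quotient.mk _ _ = _
  show _ = Ideal.Quotient.mk (Ideal.span {T j * C f - 1}) 1
  exact Ideal.Quotient.eq.mpr this

noncomputable def UR (j : ℤ) : (hypersurfaceRing n f j)ˣ :=
  Units.map (mkR f j).toRingHom.toMonoidHom tau

lemma UR_zpow (j e : ℤ) : ((UR f j ^ e : _ˣ) : hypersurfaceRing n f j) = mkR f j (T e) := by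
  rw [UR, ← map_zpow, Units.coe_map]
  show mkR f j _ = _
  rw [tau_zpow]

variable (𝒜 : ℤ → Submodule ℂ (MvPolynomial (Fin n) ℂ)) [GradedAlgebra 𝒜]
variable {m : ℤ} (hf : f ∈ 𝒜 m)

noncomputable def quotHom (j : ℤ) (ι : MvPolynomial (Fin n) ℂ →ₐ[ℂ] B) (w z : Bˣ)
    (hrel : ι f * ((w ^ m * z ^ j : Bˣ) : B) = 1) :
    hypersurfaceRing n f j →ₐ[ℂ] B :=
  Ideal.Quotient.liftₐ _ (laurentHom (gradedTwist 𝒜 ι w) z) (by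
    intro x hx
    obtain ⟨c, rfl⟩ := Ideal.mem_span_singleton.mp hx
    rw [map_mul]
    have h0 : laurentHom (gradedTwist 𝒜 ι w) z (T j * C f - 1) = 0 := by
      rw [map_sub, map_one, map_mul, laurentHom_T, laurentHom_C,
        gradedTwist_apply 𝒜 ι w hf]
      rw [sub_eq_zero, ← hrel, Units.val_mul]
      ring
    rw [h0, zero_mul])

lemma quotHom_mk_C (j : ℤ) (ι : MvPolynomial (Fin n) ℂ →ₐ[ℂ] B) (w z : Bˣ) (hrel)
    {e : ℤ} {g : MvPolynomial (Fin n) ℂ} (hg : g ∈ 𝒜 e) :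
    quotHom f 𝒜 hf j ι w z hrel (mkR f j (C g)) = ι g * ((w ^ e : Bˣ) : B) := by
  have h : quotHom f 𝒜 hf j ι w z hrel (mkR f j (C g))
      = laurentHom (gradedTwist 𝒜 ι w) z (C g) := rfl
  rw [h, laurentHom_C, gradedTwist_apply 𝒜 ι w hg]

lemma quotHom_mk_T (j : ℤ) (ι : MvPolynomial (Fin n) ℂ →ₐ[ℂ] B) (w z : Bˣ) (hrel) (e : ℤ) :
    quotHom f 𝒜 hf j ι w z hrel (mkR f j (T e)) = ((z ^ e : Bˣ) : B) := by
  have h : quotHom f 𝒜 hf j ι w z hrel (mkR f j (T e))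
      = laurentHom (gradedTwist 𝒜 ι w) z (T e) := rfl
  rw [h, laurentHom_T]

lemma R_algHom_ext {j : ℤ} {φ ψ : hypersurfaceRing n f j →ₐ[ℂ] B}
    (hC : ∀ ⦃e : ℤ⦄ (g : MvPolynomial (Fin n) ℂ), g ∈ 𝒜 e →
      φ (mkR f j (C g)) = ψ (mkR f j (C g)))
    (hT : ∀ e : ℤ, φ (mkR f j (T e)) = ψ (mkR f j (T e))) : φ = ψ := by
  have hC' : ∀ g, φ (mkR f j (C g)) = ψ (mkR f j (C g)) := by
    intro g
    refine DirectSum.Decomposition.inductionOn 𝒜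
      (motive := fun g => φ (mkR f j (C g)) = ψ (mkR f j (C g))) ?_ ?_ ?_ g
    · simp
    · rintro e ⟨x, hx⟩; exact hC x hx
    · intro x y hx hy; simp only [map_add, hx, hy]
  have hs : Function.Surjective (mkR f j) := Ideal.Quotient.mkₐ_surjective ℂ _
  apply AlgHom.ext; intro x
  obtain ⟨y, rfl⟩ := hs x
  induction y using LaurentPolynomial.induction_on' with
  | add p q hp hq => simp only [map_add, hp, hq]
  | C_mul_T e a => simp only [map_mul, hC' a, hT e]

/-! ### tensor squares -/

noncomputable instance (j k : ℤ) :
    CommRing (hypersurfaceRing n f j ⊗[ℂ] hypersurfaceRing n f k) :=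
  Algebra.TensorProduct.instCommRing

noncomputable def incl₁ (j k : ℤ) :
    hypersurfaceRing n f j →ₐ[ℂ] (hypersurfaceRing n f j ⊗[ℂ] hypersurfaceRing n f k) :=
  Algebra.TensorProduct.includeLeft

noncomputable def incl₂ (j k : ℤ) :
    hypersurfaceRing n f k →ₐ[ℂ] (hypersurfaceRing n f j ⊗[ℂ] hypersurfaceRing n f k) :=
  Algebra.TensorProduct.includeRight

noncomputable def jt₁ (j k : ℤ) :
    MvPolynomial (Fin n) ℂ →ₐ[ℂ] (hypersurfaceRing n f j ⊗[ℂ] hypersurfaceRing n f k) :=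
  (incl₁ f j k).comp ((mkR f j).comp CAlg)

noncomputable def jt₂ (j k : ℤ) :
    MvPolynomial (Fin n) ℂ →ₐ[ℂ] (hypersurfaceRing n f j ⊗[ℂ] hypersurfaceRing n f k) :=
  (incl₂ f j k).comp ((mkR f k).comp CAlg)

noncomputable def u₁ (j k : ℤ) : (hypersurfaceRing n f j ⊗[ℂ] hypersurfaceRing n f k)ˣ :=
  Units.map (incl₁ f j k).toRingHom.toMonoidHom (UR f j)

noncomputable def u₂ (j k : ℤ) : (hypersurfaceRing n f j ⊗[ℂ] hypersurfaceRing n f k)ˣ :=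
  Units.map (incl₂ f j k).toRingHom.toMonoidHom (UR f k)

lemma u₁_zpow (j k e : ℤ) :
    ((u₁ f j k ^ e : _ˣ) : hypersurfaceRing n f j ⊗[ℂ] hypersurfaceRing n f k)
      = incl₁ f j k (mkR f j (T e)) := by
  rw [u₁, ← map_zpow, Units.coe_map]
  show incl₁ f j k _ = _
  rw [UR_zpow]

lemma u₂_zpow (j k e : ℤ) :
    ((u₂ f j k ^ e : _ˣ) : hypersurfaceRing n f j ⊗[ℂ] hypersurfaceRing n f k)
      = incl₂ f j k (mkR f k (T e)) := by
  rw [u₂, ← map_zpow, Units.coe_map]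
  show incl₂ f j k _ = _
  rw [UR_zpow]

/-- the basic relation `u₁^j * jt₁ f = 1`. -/
lemma jt₁_rel (j k : ℤ) :
    jt₁ f j k f * ((u₁ f j k ^ j : _ˣ) : _) = 1 := by
  rw [u₁_zpow, jt₁]
  show incl₁ f j k (mkR f j (C f)) * incl₁ f j k (mkR f j (T j)) = 1
  rw [← map_mul, ← map_mul, mul_comm, mkR_rel, map_one]

lemma jt₂_rel (j k : ℤ) :
    jt₂ f j k f * ((u₂ f j k ^ k : _ˣ) : _) = 1 := by
  rw [u₂_zpow, jt₂]
  show incl₂ f j k (mkR f k (C f)) * incl₂ f j k (mkR f k (T k)) = 1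
  rw [← map_mul, ← map_mul, mul_comm, mkR_rel, map_one]

/-! ### commutative group exponent juggling -/

section CG
variable {G : Type*} [CommGroup G]

lemma cg_pow (u v : G) (x y c : ℤ) : (u ^ x * v ^ y) ^ c = u ^ (x * c) * v ^ (y * c) := by
  rw [mul_zpow, ← zpow_mul, ← zpow_mul]

lemma cg_collect2 (u v : G) (a1 b1 a2 b2 : ℤ) :
    (u ^ a1 * v ^ b1) * (u ^ a2 * v ^ b2) = u ^ (a1 + a2) * v ^ (b1 + b2) := by
  rw [zpow_add, zpow_add]; exact mul_mul_mul_comm _ _ _ _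

lemma cg_mix2 (u v : G) (x1 y1 c1 x2 y2 c2 e e' : ℤ)
    (hx : x1 * c1 + x2 * c2 = e) (hy : y1 * c1 + y2 * c2 = e') :
    (u ^ x1 * v ^ y1) ^ c1 * (u ^ x2 * v ^ y2) ^ c2 = u ^ e * v ^ e' := by
  rw [cg_pow, cg_pow, cg_collect2, hx, hy]

lemma cg_mix3 (u v : G) (x1 y1 c1 x2 y2 c2 x3 y3 c3 : ℤ)
    (hx : x1 * c1 + x2 * c2 + x3 * c3 = 0) (hy : y1 * c1 + y2 * c2 + y3 * c3 = 0) :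
    (u ^ x1 * v ^ y1) ^ c1 * ((u ^ x2 * v ^ y2) ^ c2 * (u ^ x3 * v ^ y3) ^ c3) = 1 := by
  rw [cg_pow, cg_pow, cg_pow, cg_collect2, cg_collect2, ← add_assoc, ← add_assoc, hx, hy,
    zpow_zero, zpow_zero, one_mul]

end CG

/-! ### ext lemma for tensor squares -/

lemma PT_algHom_ext {j k : ℤ}
    {φ ψ : (hypersurfaceRing n f j ⊗[ℂ] hypersurfaceRing n f k) →ₐ[ℂ] B}
    (hC1 : ∀ ⦃e : ℤ⦄ (g : MvPolynomial (Fin n) ℂ), g ∈ 𝒜 e →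
      φ (incl₁ f j k (mkR f j (C g))) = ψ (incl₁ f j k (mkR f j (C g))))
    (hT1 : ∀ e : ℤ, φ (incl₁ f j k (mkR f j (T e))) = ψ (incl₁ f j k (mkR f j (T e))))
    (hC2 : ∀ ⦃e : ℤ⦄ (g : MvPolynomial (Fin n) ℂ), g ∈ 𝒜 e →
      φ (incl₂ f j k (mkR f k (C g))) = ψ (incl₂ f j k (mkR f k (C g))))
    (hT2 : ∀ e : ℤ, φ (incl₂ f j k (mkR f k (T e))) = ψ (incl₂ f j k (mkR f k (T e)))) :
    φ = ψ := by
  refine Algebra.TensorProduct.ext ?_ ?_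
  · exact R_algHom_ext f 𝒜 (fun e g hg => hC1 g hg) hT1
  · exact R_algHom_ext f 𝒜 (fun e g hg => hC2 g hg) hT2

/-! ### the moves -/

section Move

variable (j k j' k' p q r s α β γ δ : ℤ)

noncomputable def w1 : (hypersurfaceRing n f j' ⊗[ℂ] hypersurfaceRing n f k')ˣ :=
  u₁ f j' k' ^ p * u₂ f j' k' ^ q

noncomputable def z1 : (hypersurfaceRing n f j' ⊗[ℂ] hypersurfaceRing n f k')ˣ :=
  u₁ f j' k' ^ α * u₂ f j' k' ^ β

noncomputable def w2 : (hypersurfaceRing n f j' ⊗[ℂ] hypersurfaceRing n f k')ˣ :=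
  u₁ f j' k' ^ r * u₂ f j' k' ^ s

noncomputable def z2 : (hypersurfaceRing n f j' ⊗[ℂ] hypersurfaceRing n f k')ˣ :=
  u₁ f j' k' ^ γ * u₂ f j' k' ^ δ

lemma rel1 (hF1 : p * m + α * j = j') (hF2 : q * m + β * j = 0) : jt₁ f j' k' f
    * (((w1 f j' k' p q) ^ m * (z1 f j' k' α β) ^ j : _ˣ) : _) = 1 := by
  have h : (w1 f j' k' p q) ^ m * (z1 f j' k' α β) ^ j
      = u₁ f j' k' ^ j' * u₂ f j' k' ^ (0 : ℤ) :=
    cg_mix2 _ _ _ _ _ _ _ _ _ _ hF1 hF2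
  rw [h, zpow_zero, mul_one]
  exact jt₁_rel f j' k'

lemma rel2 (hF3 : r * m + γ * k = 0) (hF4 : s * m + δ * k = k') : jt₂ f j' k' f
    * (((w2 f j' k' r s) ^ m * (z2 f j' k' γ δ) ^ k : _ˣ) : _) = 1 := by
  have h : (w2 f j' k' r s) ^ m * (z2 f j' k' γ δ) ^ k
      = u₁ f j' k' ^ (0 : ℤ) * u₂ f j' k' ^ k' :=
    cg_mix2 _ _ _ _ _ _ _ _ _ _ hF3 hF4
  rw [h, zpow_zero, one_mul]
  exact jt₂_rel f j' k'

noncomputable def moveHalf₁ (hF1 : p * m + α * j = j') (hF2 : q * m + β * j = 0) : hypersurfaceRing n f j →ₐ[ℂ]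
    (hypersurfaceRing n f j' ⊗[ℂ] hypersurfaceRing n f k') :=
  quotHom f 𝒜 hf j (jt₁ f j' k') (w1 f j' k' p q) (z1 f j' k' α β)
    (rel1 f j j' k' p q α β hF1 hF2)

noncomputable def moveHalf₂ (hF3 : r * m + γ * k = 0) (hF4 : s * m + δ * k = k') : hypersurfaceRing n f k →ₐ[ℂ]
    (hypersurfaceRing n f j' ⊗[ℂ] hypersurfaceRing n f k') :=
  quotHom f 𝒜 hf k (jt₂ f j' k') (w2 f j' k' r s) (z2 f j' k' γ δ)
    (rel2 f k j' k' r s γ δ hF3 hF4)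

noncomputable def moveHom (hF1 : p * m + α * j = j') (hF2 : q * m + β * j = 0) (hF3 : r * m + γ * k = 0) (hF4 : s * m + δ * k = k') :
    (hypersurfaceRing n f j ⊗[ℂ] hypersurfaceRing n f k) →ₐ[ℂ]
      (hypersurfaceRing n f j' ⊗[ℂ] hypersurfaceRing n f k') :=
  Algebra.TensorProduct.lift
    (moveHalf₁ f 𝒜 hf j j' k' p q α β hF1 hF2)
    (moveHalf₂ f 𝒜 hf k j' k' r s γ δ hF3 hF4)
    (fun _ _ => Commute.all _ _)

lemma moveHom_C₁ (hF1 : p * m + α * j = j') (hF2 : q * m + β * j = 0) (hF3 : r * m + γ * k = 0) (hF4 : s * m + δ * k = k') {e : ℤ} {g : MvPolynomial (Fin n) ℂ} (hg : g ∈ 𝒜 e) :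
    moveHom f 𝒜 hf j k j' k' p q r s α β γ δ hF1 hF2 hF3 hF4 (incl₁ f j k (mkR f j (C g)))
      = jt₁ f j' k' g * (((w1 f j' k' p q) ^ e : _ˣ) : _) := by
  have h := AlgHom.congr_fun (Algebra.TensorProduct.lift_comp_includeLeft
    (moveHalf₁ f 𝒜 hf j j' k' p q α β hF1 hF2)
    (moveHalf₂ f 𝒜 hf k j' k' r s γ δ hF3 hF4)
    (fun _ _ => Commute.all _ _)) (mkR f j (C g))
  rw [moveHom]
  exact h.trans (quotHom_mk_C f 𝒜 hf j _ _ _ _ hg)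

lemma moveHom_T₁ (hF1 : p * m + α * j = j') (hF2 : q * m + β * j = 0) (hF3 : r * m + γ * k = 0) (hF4 : s * m + δ * k = k') (e : ℤ) :
    moveHom f 𝒜 hf j k j' k' p q r s α β γ δ hF1 hF2 hF3 hF4 (incl₁ f j k (mkR f j (T e)))
      = (((z1 f j' k' α β) ^ e : _ˣ) : _) := by
  have h := AlgHom.congr_fun (Algebra.TensorProduct.lift_comp_includeLeft
    (moveHalf₁ f 𝒜 hf j j' k' p q α β hF1 hF2)
    (moveHalf₂ f 𝒜 hf k j' k' r s γ δ hF3 hF4)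
    (fun _ _ => Commute.all _ _)) (mkR f j (T e))
  rw [moveHom]
  exact h.trans (quotHom_mk_T f 𝒜 hf j _ _ _ _ e)

lemma moveHom_C₂ (hF1 : p * m + α * j = j') (hF2 : q * m + β * j = 0) (hF3 : r * m + γ * k = 0) (hF4 : s * m + δ * k = k') {e : ℤ} {g : MvPolynomial (Fin n) ℂ} (hg : g ∈ 𝒜 e) :
    moveHom f 𝒜 hf j k j' k' p q r s α β γ δ hF1 hF2 hF3 hF4 (incl₂ f j k (mkR f k (C g)))
      = jt₂ f j' k' g * (((w2 f j' k' r s) ^ e : _ˣ) : _) := by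
  have h := AlgHom.congr_fun (Algebra.TensorProduct.lift_comp_includeRight
    (moveHalf₁ f 𝒜 hf j j' k' p q α β hF1 hF2)
    (moveHalf₂ f 𝒜 hf k j' k' r s γ δ hF3 hF4)
    (fun _ _ => Commute.all _ _)) (mkR f k (C g))
  rw [moveHom]
  exact h.trans (quotHom_mk_C f 𝒜 hf k _ _ _ _ hg)

lemma moveHom_T₂ (hF1 : p * m + α * j = j') (hF2 : q * m + β * j = 0) (hF3 : r * m + γ * k = 0) (hF4 : s * m + δ * k = k') (e : ℤ) :
    moveHom f 𝒜 hf j k j' k' p q r s α β γ δ hF1 hF2 hF3 hF4 (incl₂ f j k (mkR f k (T e)))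
      = (((z2 f j' k' γ δ) ^ e : _ˣ) : _) := by
  have h := AlgHom.congr_fun (Algebra.TensorProduct.lift_comp_includeRight
    (moveHalf₁ f 𝒜 hf j j' k' p q α β hF1 hF2)
    (moveHalf₂ f 𝒜 hf k j' k' r s γ δ hF3 hF4)
    (fun _ _ => Commute.all _ _)) (mkR f k (T e))
  rw [moveHom]
  exact h.trans (quotHom_mk_T f 𝒜 hf k _ _ _ _ e)


lemma jt₁_def (j k : ℤ) (g : MvPolynomial (Fin n) ℂ) :
    jt₁ f j k g = incl₁ f j k (mkR f j (C g)) := rfl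

lemma jt₂_def (j k : ℤ) (g : MvPolynomial (Fin n) ℂ) :
    jt₂ f j k g = incl₂ f j k (mkR f k (C g)) := rfl

set_option maxHeartbeats 2000000 in
lemma move_comp (p' q' r' s' α' β' γ' δ' : ℤ)
    (hF1 : p * m + α * j = j') (hF2 : q * m + β * j = 0)
    (hF3 : r * m + γ * k = 0) (hF4 : s * m + δ * k = k')
    (hB1 : p' * m + α' * j' = j) (hB2 : q' * m + β' * j' = 0)
    (hB3 : r' * m + γ' * k' = 0) (hB4 : s' * m + δ' * k' = k)
    (hG1 : p' + α' * p + γ' * q = 0) (hG2 : q' + β' * p + δ' * q = 0)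
    (hG3 : r' + α' * r + γ' * s = 0) (hG4 : s' + β' * r + δ' * s = 0)
    (hG5 : α' * α + γ' * β = 1) (hG6 : β' * α + δ' * β = 0)
    (hG7 : α' * γ + γ' * δ = 0) (hG8 : β' * γ + δ' * δ = 1) :
    (moveHom f 𝒜 hf j' k' j k p' q' r' s' α' β' γ' δ' hB1 hB2 hB3 hB4).comp
      (moveHom f 𝒜 hf j k j' k' p q r s α β γ δ hF1 hF2 hF3 hF4)
      = AlgHom.id ℂ (hypersurfaceRing n f j ⊗[ℂ] hypersurfaceRing n f k) := by
  set Fwd := moveHom f 𝒜 hf j k j' k' p q r s α β γ δ hF1 hF2 hF3 hF4 with hFwd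
  set Bwd := moveHom f 𝒜 hf j' k' j k p' q' r' s' α' β' γ' δ' hB1 hB2 hB3 hB4 with hBwd
  apply PT_algHom_ext f 𝒜
  · intro e g hg
    rw [AlgHom.coe_comp, Function.comp_apply, AlgHom.id_apply, hFwd,
      moveHom_C₁ f 𝒜 hf j k j' k' p q r s α β γ δ hF1 hF2 hF3 hF4 hg, map_mul]
    have h2 : ((w1 f j' k' p q ^ e : _ˣ) :
        hypersurfaceRing n f j' ⊗[ℂ] hypersurfaceRing n f k')
        = ((u₁ f j' k' ^ (p * e) : _ˣ) : _) * ((u₂ f j' k' ^ (q * e) : _ˣ) : _) := by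
      rw [w1, cg_pow, Units.val_mul]
    rw [jt₁_def, h2, map_mul, u₁_zpow, u₂_zpow, hBwd,
      moveHom_C₁ f 𝒜 hf j' k' j k p' q' r' s' α' β' γ' δ' hB1 hB2 hB3 hB4 hg,
      moveHom_T₁ f 𝒜 hf j' k' j k p' q' r' s' α' β' γ' δ' hB1 hB2 hB3 hB4 (p * e),
      moveHom_T₂ f 𝒜 hf j' k' j k p' q' r' s' α' β' γ' δ' hB1 hB2 hB3 hB4 (q * e),
      mul_assoc, ← Units.val_mul, ← Units.val_mul]
    have h3 : w1 f j k p' q' ^ e * (z1 f j k α' β' ^ (p * e) * z2 f j k γ' δ' ^ (q * e))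
        = 1 := by
      rw [w1, z1, z2]
      exact cg_mix3 _ _ _ _ _ _ _ _ _ _ _
        (by linear_combination e * hG1) (by linear_combination e * hG2)
    rw [h3, Units.val_one, mul_one, jt₁_def]
  · intro e
    rw [AlgHom.coe_comp, Function.comp_apply, AlgHom.id_apply, hFwd,
      moveHom_T₁ f 𝒜 hf j k j' k' p q r s α β γ δ hF1 hF2 hF3 hF4 e]
    have h2 : ((z1 f j' k' α β ^ e : _ˣ) :
        hypersurfaceRing n f j' ⊗[ℂ] hypersurfaceRing n f k')
        = ((u₁ f j' k' ^ (α * e) : _ˣ) : _) * ((u₂ f j' k' ^ (β * e) : _ˣ) : _) := by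
      rw [z1, cg_pow, Units.val_mul]
    rw [h2, map_mul, u₁_zpow, u₂_zpow, hBwd,
      moveHom_T₁ f 𝒜 hf j' k' j k p' q' r' s' α' β' γ' δ' hB1 hB2 hB3 hB4 (α * e),
      moveHom_T₂ f 𝒜 hf j' k' j k p' q' r' s' α' β' γ' δ' hB1 hB2 hB3 hB4 (β * e),
      ← Units.val_mul]
    have h3 : z1 f j k α' β' ^ (α * e) * z2 f j k γ' δ' ^ (β * e)
        = u₁ f j k ^ e * u₂ f j k ^ (0 : ℤ) := by
      rw [z1, z2]
      exact cg_mix2 _ _ _ _ _ _ _ _ _ _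
        (by linear_combination e * hG5) (by linear_combination e * hG6)
    rw [h3, zpow_zero, mul_one, u₁_zpow]
  · intro e g hg
    rw [AlgHom.coe_comp, Function.comp_apply, AlgHom.id_apply, hFwd,
      moveHom_C₂ f 𝒜 hf j k j' k' p q r s α β γ δ hF1 hF2 hF3 hF4 hg, map_mul]
    have h2 : ((w2 f j' k' r s ^ e : _ˣ) :
        hypersurfaceRing n f j' ⊗[ℂ] hypersurfaceRing n f k')
        = ((u₁ f j' k' ^ (r * e) : _ˣ) : _) * ((u₂ f j' k' ^ (s * e) : _ˣ) : _) := by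
      rw [w2, cg_pow, Units.val_mul]
    rw [jt₂_def, h2, map_mul, u₁_zpow, u₂_zpow, hBwd,
      moveHom_C₂ f 𝒜 hf j' k' j k p' q' r' s' α' β' γ' δ' hB1 hB2 hB3 hB4 hg,
      moveHom_T₁ f 𝒜 hf j' k' j k p' q' r' s' α' β' γ' δ' hB1 hB2 hB3 hB4 (r * e),
      moveHom_T₂ f 𝒜 hf j' k' j k p' q' r' s' α' β' γ' δ' hB1 hB2 hB3 hB4 (s * e),
      mul_assoc, ← Units.val_mul, ← Units.val_mul]
    have h3 : w2 f j k r' s' ^ e * (z1 f j k α' β' ^ (r * e) * z2 f j k γ' δ' ^ (s * e))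
        = 1 := by
      rw [w2, z1, z2]
      exact cg_mix3 _ _ _ _ _ _ _ _ _ _ _
        (by linear_combination e * hG3) (by linear_combination e * hG4)
    rw [h3, Units.val_one, mul_one, jt₂_def]
  · intro e
    rw [AlgHom.coe_comp, Function.comp_apply, AlgHom.id_apply, hFwd,
      moveHom_T₂ f 𝒜 hf j k j' k' p q r s α β γ δ hF1 hF2 hF3 hF4 e]
    have h2 : ((z2 f j' k' γ δ ^ e : _ˣ) :
        hypersurfaceRing n f j' ⊗[ℂ] hypersurfaceRing n f k')
        = ((u₁ f j' k' ^ (γ * e) : _ˣ) : _) * ((u₂ f j' k' ^ (δ * e) : _ˣ) : _) := by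
      rw [z2, cg_pow, Units.val_mul]
    rw [h2, map_mul, u₁_zpow, u₂_zpow, hBwd,
      moveHom_T₁ f 𝒜 hf j' k' j k p' q' r' s' α' β' γ' δ' hB1 hB2 hB3 hB4 (γ * e),
      moveHom_T₂ f 𝒜 hf j' k' j k p' q' r' s' α' β' γ' δ' hB1 hB2 hB3 hB4 (δ * e),
      ← Units.val_mul]
    have h3 : z1 f j k α' β' ^ (γ * e) * z2 f j k γ' δ' ^ (δ * e)
        = u₁ f j k ^ (0 : ℤ) * u₂ f j k ^ e := by
      rw [z1, z2]
      exact cg_mix2 _ _ _ _ _ _ _ _ _ _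
        (by linear_combination e * hG7) (by linear_combination e * hG8)
    rw [h3, zpow_zero, one_mul, u₂_zpow]

noncomputable def moveEquiv (p' q' r' s' α' β' γ' δ' : ℤ)
    (hF1 : p * m + α * j = j') (hF2 : q * m + β * j = 0)
    (hF3 : r * m + γ * k = 0) (hF4 : s * m + δ * k = k')
    (hB1 : p' * m + α' * j' = j) (hB2 : q' * m + β' * j' = 0)
    (hB3 : r' * m + γ' * k' = 0) (hB4 : s' * m + δ' * k' = k)
    (hG1 : p' + α' * p + γ' * q = 0) (hG2 : q' + β' * p + δ' * q = 0)
    (hG3 : r' + α' * r + γ' * s = 0) (hG4 : s' + β' * r + δ' * s = 0)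
    (hG5 : α' * α + γ' * β = 1) (hG6 : β' * α + δ' * β = 0)
    (hG7 : α' * γ + γ' * δ = 0) (hG8 : β' * γ + δ' * δ = 1)
    (hH1 : p + α * p' + γ * q' = 0) (hH2 : q + β * p' + δ * q' = 0)
    (hH3 : r + α * r' + γ * s' = 0) (hH4 : s + β * r' + δ * s' = 0)
    (hH5 : α * α' + γ * β' = 1) (hH6 : β * α' + δ * β' = 0)
    (hH7 : α * γ' + γ * δ' = 0) (hH8 : β * γ' + δ * δ' = 1) :
    (hypersurfaceRing n f j ⊗[ℂ] hypersurfaceRing n f k) ≃ₐ[ℂ]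
      (hypersurfaceRing n f j' ⊗[ℂ] hypersurfaceRing n f k') :=
  AlgEquiv.ofAlgHom
    (moveHom f 𝒜 hf j k j' k' p q r s α β γ δ hF1 hF2 hF3 hF4)
    (moveHom f 𝒜 hf j' k' j k p' q' r' s' α' β' γ' δ' hB1 hB2 hB3 hB4)
    (move_comp f 𝒜 hf j' k' j k p' q' r' s' α' β' γ' δ' p q r s α β γ δ
      hB1 hB2 hB3 hB4 hF1 hF2 hF3 hF4 hH1 hH2 hH3 hH4 hH5 hH6 hH7 hH8)
    (move_comp f 𝒜 hf j k j' k' p q r s α β γ δ p' q' r' s' α' β' γ' δ'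
      hF1 hF2 hF3 hF4 hB1 hB2 hB3 hB4 hG1 hG2 hG3 hG4 hG5 hG6 hG7 hG8)

end Move


/-- **Corollary (squares).** Let `A = ℂ[x₁,…,xₙ]` with a `ℤ`-grading, `m ≠ 0`, and
`f ∈ A` homogeneous of degree `m`.  If `a, b ≥ 1` satisfy `a + b ≡ 0 (mod m)` and
`a·b ≡ 1 (mod m²)`, then the squares `X̃_{f,1} × X̃_{f,1}` and `X̃_{f,a} × X̃_{f,a}` are
isomorphic, i.e. `R_{f,1} ⊗_ℂ R_{f,1} ≅ R_{f,a} ⊗_ℂ R_{f,a}` as `ℂ`-algebras. -/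
theorem squares_iso (n : ℕ) (hn : 1 ≤ n)
    (𝒜 : ℤ → Submodule ℂ (MvPolynomial (Fin n) ℂ)) [GradedAlgebra 𝒜]
    (m : ℤ) (hm : m ≠ 0)
    (f : MvPolynomial (Fin n) ℂ) (hf : f ∈ 𝒜 m)
    (a b : ℤ) (ha : 1 ≤ a) (hb : 1 ≤ b)
    (hsum : a + b ≡ 0 [ZMOD m]) (hprod : a * b ≡ 1 [ZMOD m ^ 2]) :
    Nonempty ((hypersurfaceRing n f 1 ⊗[ℂ] hypersurfaceRing n f 1) ≃ₐ[ℂ]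
      (hypersurfaceRing n f a ⊗[ℂ] hypersurfaceRing n f a)) := by
  obtain ⟨c, hc⟩ : m ∣ a + b := Int.modEq_zero_iff_dvd.mp hsum
  obtain ⟨d, hd⟩ : m ^ 2 ∣ a * b - 1 := hprod.symm.dvd
  have e1 : (hypersurfaceRing n f 1 ⊗[ℂ] hypersurfaceRing n f 1) ≃ₐ[ℂ]
      (hypersurfaceRing n f (a ^ 2) ⊗[ℂ] hypersurfaceRing n f (a * b)) :=
    moveEquiv f 𝒜 hf 1 1 (a ^ 2) (a * b)
      (a * c - m * d) 0 0 (m * d) (-1) 0 0 1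
      (a * c - m * d) 0 0 (-(m * d)) (-1) 0 0 1
      (by linear_combination hd - a * hc) (by ring) (by ring) (by linear_combination -hd)
      (by linear_combination hd - a * hc) (by ring) (by ring) (by linear_combination hd)
      (by ring) (by ring) (by ring) (by ring) (by ring) (by ring) (by ring) (by ring)
      (by ring) (by ring) (by ring) (by ring) (by ring) (by ring) (by ring) (by ring)
  have e2 : (hypersurfaceRing n f a ⊗[ℂ] hypersurfaceRing n f a) ≃ₐ[ℂ]
      (hypersurfaceRing n f (a ^ 2) ⊗[ℂ] hypersurfaceRing n f (a * b)) :=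
    moveEquiv f 𝒜 hf a a (a ^ 2) (a * b)
      0 (-a) (-(a * d)) 0 a m (m * d) b
      (-(a * m * d)) (a ^ 2) (a * b * d) (-(a * m * d)) b (-m) (-(m * d)) a
      (by ring) (by ring) (by ring) (by ring)
      (by linear_combination a * hd) (by ring) (by ring) (by linear_combination a * hd)
      (by ring) (by ring) (by ring) (by ring)
      (by linear_combination hd) (by ring) (by ring) (by linear_combination hd)
      (by ring) (by linear_combination a * hd)
      (by linear_combination a * d * hd) (by ring)
      (by linear_combination hd) (by ring) (by ring) (by linear_combination hd)
  exact ⟨e1.trans e2.symm⟩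
end

section
/- Let A₁ = ℂ[x,y,t]/(t(x² + y⁵) − 1) and A₃ = ℂ[x,y,t]/(t³(x² + y⁵) − 1). Then the ℂ-algebras A₁ ⊗_ℂ A₁ and A₃ ⊗_ℂ A₃ are isomorphic (although A₁ and A₃ are not isomorphic). -/
open TensorProduct

set_option synthInstance.maxHeartbeats 1000000
set_option maxHeartbeats 4000000

/-- `A_ℓ = ℂ[x,y,t]/(t^ℓ(x² + y⁵) - 1)`, the coordinate ring of the surface
`X_ℓ ⊂ 𝔸³` defined by `t^ℓ(x² + y⁵) = 1`. -/
noncomputable abbrev surfaceRing25 (ℓ : ℕ) : Type :=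
  MvPolynomial (Fin 3) ℂ ⧸ Ideal.span
    {(MvPolynomial.X 2 : MvPolynomial (Fin 3) ℂ) ^ ℓ *
      ((MvPolynomial.X 0) ^ 2 + (MvPolynomial.X 1) ^ 5) - 1}

namespace Case25Aux

open MvPolynomial

noncomputable section

abbrev Poly : Type := MvPolynomial (Fin 3) ℂ

def xg (ℓ : ℕ) : surfaceRing25 ℓ := Ideal.Quotient.mk _ (X 0)
def yg (ℓ : ℕ) : surfaceRing25 ℓ := Ideal.Quotient.mk _ (X 1)
def tg (ℓ : ℕ) : surfaceRing25 ℓ := Ideal.Quotient.mk _ (X 2)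
def fg (ℓ : ℕ) : surfaceRing25 ℓ := xg ℓ ^ 2 + yg ℓ ^ 5

lemma rel (ℓ : ℕ) : tg ℓ ^ ℓ * fg ℓ = 1 := by
  have h : (Ideal.Quotient.mk (Ideal.span
      {(X 2 : Poly) ^ ℓ * ((X 0) ^ 2 + (X 1) ^ 5) - 1}))
      ((X 2 : Poly) ^ ℓ * ((X 0) ^ 2 + (X 1) ^ 5) - 1) = 0 :=
    Ideal.Quotient.eq_zero_iff_mem.mpr (Ideal.subset_span rfl)
  simp only [map_sub, map_mul, map_pow, map_add, map_one] at h
  exact sub_eq_zero.mp h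

lemma relpow (ℓ m k : ℕ) (h : k = ℓ * m) : tg ℓ ^ k * fg ℓ ^ m = 1 := by
  subst h
  rw [pow_mul, ← mul_pow, rel, one_pow]

def lift (ℓ : ℕ) {S : Type} [CommRing S] [Algebra ℂ S] (v : Fin 3 → S)
    (hv : v 2 ^ ℓ * (v 0 ^ 2 + v 1 ^ 5) = 1) : surfaceRing25 ℓ →ₐ[ℂ] S :=
  Ideal.Quotient.liftₐ _ (aeval v) (by
    intro a ha
    rw [Ideal.mem_span_singleton] at ha
    obtain ⟨c, rfl⟩ := ha
    have h : (aeval v) ((X 2 : Poly) ^ ℓ * ((X 0) ^ 2 + (X 1) ^ 5) - 1) = 0 := by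
      simp only [map_sub, map_mul, map_pow, map_add, map_one, aeval_X]
      rw [hv, sub_self]
    rw [map_mul, h, zero_mul])

lemma lift_mk (ℓ : ℕ) {S : Type} [CommRing S] [Algebra ℂ S] (v : Fin 3 → S)
    (hv : v 2 ^ ℓ * (v 0 ^ 2 + v 1 ^ 5) = 1) (p : Poly) :
    lift ℓ v hv (Ideal.Quotient.mk _ p) = aeval v p := by
  simp [lift, Ideal.Quotient.liftₐ_apply, Ideal.Quotient.lift_mk]; rfl

lemma tmul_congr {M N : Type} [AddCommMonoid M] [AddCommMonoid N] [Module ℂ M]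
    [Module ℂ N] {a c : M} {b d : N} (h1 : a = c) (h2 : b = d) :
    a ⊗ₜ[ℂ] b = c ⊗ₜ[ℂ] d := by rw [h1, h2]

end

end Case25Aux

namespace Case25Aux

open MvPolynomial

noncomputable section

abbrev SA : Type := surfaceRing25 1
abbrev SB : Type := surfaceRing25 3
abbrev CC : Type := SB ⊗[ℂ] SB
abbrev DD : Type := SA ⊗[ℂ] SA

instance instMHC1 : MonoidHomClass (SA →ₐ[ℂ] CC) SA CC := RingHomClass.toMonoidHomClass
instance instMHC2 : MonoidHomClass (SB →ₐ[ℂ] DD) SB DD := RingHomClass.toMonoidHomClass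
instance instMHC3 : MonoidHomClass (DD →ₐ[ℂ] CC) DD CC := RingHomClass.toMonoidHomClass
instance instMHC4 : MonoidHomClass (CC →ₐ[ℂ] DD) CC DD := RingHomClass.toMonoidHomClass

def vL : Fin 3 → CC :=
  ![(xg 3 * tg 3 ^ 5) ⊗ₜ[ℂ] (tg 3 ^ 5),
    (yg 3 * tg 3 ^ 2) ⊗ₜ[ℂ] (tg 3 ^ 2),
    (fg 3 ^ 3 * tg 3 ^ 2) ⊗ₜ[ℂ] (fg 3 ^ 4 * tg 3 ^ 2)]

lemma hvL : vL 2 ^ 1 * (vL 0 ^ 2 + vL 1 ^ 5) = 1 := by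
  have e0 : vL 0 = (xg 3 * tg 3 ^ 5) ⊗ₜ[ℂ] (tg 3 ^ 5) := rfl
  have e1 : vL 1 = (yg 3 * tg 3 ^ 2) ⊗ₜ[ℂ] (tg 3 ^ 2) := rfl
  have e2 : vL 2 = (fg 3 ^ 3 * tg 3 ^ 2) ⊗ₜ[ℂ] (fg 3 ^ 4 * tg 3 ^ 2) := rfl
  rw [e0, e1, e2, pow_one, Algebra.TensorProduct.tmul_pow,
    Algebra.TensorProduct.tmul_pow,
    show ((tg 3 ^ 5 : SB) ^ 2) = tg 3 ^ 10 from by ring,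
    show ((tg 3 ^ 2 : SB) ^ 5) = tg 3 ^ 10 from by ring,
    ← TensorProduct.add_tmul, Algebra.TensorProduct.tmul_mul_tmul,
    show (1 : CC) = (1 : SB) ⊗ₜ[ℂ] (1 : SB) from rfl]
  refine tmul_congr ?_ ?_
  · have hfg : fg 3 = xg 3 ^ 2 + yg 3 ^ 5 := rfl
    linear_combination (tg 3 ^ 12 * fg 3 ^ 3) * hfg.symm + relpow 3 4 12 (by norm_num)
  · linear_combination relpow 3 4 12 (by norm_num)


def vR : Fin 3 → CC :=
  ![(tg 3 ^ 20) ⊗ₜ[ℂ] (xg 3 * tg 3 ^ 30),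
    (tg 3 ^ 8) ⊗ₜ[ℂ] (yg 3 * tg 3 ^ 12),
    (fg 3 ^ 14 * tg 3 ^ 2) ⊗ₜ[ℂ] (fg 3 ^ 19)]

lemma hvR : vR 2 ^ 1 * (vR 0 ^ 2 + vR 1 ^ 5) = 1 := by
  have e0 : vR 0 = (tg 3 ^ 20) ⊗ₜ[ℂ] (xg 3 * tg 3 ^ 30) := rfl
  have e1 : vR 1 = (tg 3 ^ 8) ⊗ₜ[ℂ] (yg 3 * tg 3 ^ 12) := rfl
  have e2 : vR 2 = (fg 3 ^ 14 * tg 3 ^ 2) ⊗ₜ[ℂ] (fg 3 ^ 19) := rfl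
  rw [e0, e1, e2, pow_one, Algebra.TensorProduct.tmul_pow,
    Algebra.TensorProduct.tmul_pow,
    show ((tg 3 ^ 20 : SB) ^ 2) = tg 3 ^ 40 from by ring,
    show ((tg 3 ^ 8 : SB) ^ 5) = tg 3 ^ 40 from by ring,
    ← TensorProduct.tmul_add, Algebra.TensorProduct.tmul_mul_tmul,
    show (1 : CC) = (1 : SB) ⊗ₜ[ℂ] (1 : SB) from rfl]
  refine tmul_congr ?_ ?_
  · linear_combination relpow 3 14 42 (by norm_num)
  · have hfg : fg 3 = xg 3 ^ 2 + yg 3 ^ 5 := rfl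
    linear_combination (fg 3 ^ 19 * tg 3 ^ 60) * hfg.symm + relpow 3 20 60 (by norm_num)

def wL : Fin 3 → DD :=
  ![(xg 1 * fg 1 ^ 285 * tg 1 ^ 200) ⊗ₜ[ℂ] (tg 1 ^ 50 * fg 1 ^ 35),
    (yg 1 * fg 1 ^ 114 * tg 1 ^ 80) ⊗ₜ[ℂ] (tg 1 ^ 20 * fg 1 ^ 14),
    (tg 1 ^ 57) ⊗ₜ[ℂ] (fg 1 ^ 10)]

lemma hwL : wL 2 ^ 3 * (wL 0 ^ 2 + wL 1 ^ 5) = 1 := by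
  have e0 : wL 0 = (xg 1 * fg 1 ^ 285 * tg 1 ^ 200) ⊗ₜ[ℂ] (tg 1 ^ 50 * fg 1 ^ 35) := rfl
  have e1 : wL 1 = (yg 1 * fg 1 ^ 114 * tg 1 ^ 80) ⊗ₜ[ℂ] (tg 1 ^ 20 * fg 1 ^ 14) := rfl
  have e2 : wL 2 = (tg 1 ^ 57) ⊗ₜ[ℂ] (fg 1 ^ 10) := rfl
  rw [e0, e1, e2, Algebra.TensorProduct.tmul_pow, Algebra.TensorProduct.tmul_pow,
    Algebra.TensorProduct.tmul_pow,
    show ((tg 1 ^ 50 * fg 1 ^ 35 : SA) ^ 2) = tg 1 ^ 100 * fg 1 ^ 70 from by ring,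
    show ((tg 1 ^ 20 * fg 1 ^ 14 : SA) ^ 5) = tg 1 ^ 100 * fg 1 ^ 70 from by ring,
    ← TensorProduct.add_tmul, Algebra.TensorProduct.tmul_mul_tmul,
    show (1 : DD) = (1 : SA) ⊗ₜ[ℂ] (1 : SA) from rfl]
  refine tmul_congr ?_ ?_
  · have hfg : fg 1 = xg 1 ^ 2 + yg 1 ^ 5 := rfl
    linear_combination (fg 1 ^ 570 * tg 1 ^ 571) * hfg.symm + relpow 1 571 571 (by norm_num)
  · linear_combination relpow 1 100 100 (by norm_num)

def wR : Fin 3 → DD :=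
  ![(fg 1 ^ 1140 * tg 1 ^ 1200) ⊗ₜ[ℂ] (xg 1 * tg 1 ^ 200 * fg 1 ^ 210),
    (fg 1 ^ 456 * tg 1 ^ 480) ⊗ₜ[ℂ] (yg 1 * tg 1 ^ 80 * fg 1 ^ 84),
    (fg 1 ^ 40) ⊗ₜ[ℂ] (tg 1 ^ 7)]

lemma hwR : wR 2 ^ 3 * (wR 0 ^ 2 + wR 1 ^ 5) = 1 := by
  have e0 : wR 0 = (fg 1 ^ 1140 * tg 1 ^ 1200) ⊗ₜ[ℂ] (xg 1 * tg 1 ^ 200 * fg 1 ^ 210) := rfl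
  have e1 : wR 1 = (fg 1 ^ 456 * tg 1 ^ 480) ⊗ₜ[ℂ] (yg 1 * tg 1 ^ 80 * fg 1 ^ 84) := rfl
  have e2 : wR 2 = (fg 1 ^ 40) ⊗ₜ[ℂ] (tg 1 ^ 7) := rfl
  rw [e0, e1, e2, Algebra.TensorProduct.tmul_pow, Algebra.TensorProduct.tmul_pow,
    Algebra.TensorProduct.tmul_pow,
    show ((fg 1 ^ 1140 * tg 1 ^ 1200 : SA) ^ 2) = fg 1 ^ 2280 * tg 1 ^ 2400 from by ring,
    show ((fg 1 ^ 456 * tg 1 ^ 480 : SA) ^ 5) = fg 1 ^ 2280 * tg 1 ^ 2400 from by ring,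
    ← TensorProduct.tmul_add, Algebra.TensorProduct.tmul_mul_tmul,
    show (1 : DD) = (1 : SA) ⊗ₜ[ℂ] (1 : SA) from rfl]
  refine tmul_congr ?_ ?_
  · linear_combination relpow 1 2400 2400 (by norm_num)
  · have hfg : fg 1 = xg 1 ^ 2 + yg 1 ^ 5 := rfl
    linear_combination (fg 1 ^ 420 * tg 1 ^ 421) * hfg.symm + relpow 1 421 421 (by norm_num)

def phiL : SA →ₐ[ℂ] CC := lift 1 vL hvL
def phiR : SA →ₐ[ℂ] CC := lift 1 vR hvR
def psiL : SB →ₐ[ℂ] DD := lift 3 wL hwL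
def psiR : SB →ₐ[ℂ] DD := lift 3 wR hwR

lemma phiL_x : phiL (xg 1) = (xg 3 * tg 3 ^ 5) ⊗ₜ[ℂ] (tg 3 ^ 5) := by
  unfold phiL xg; rw [lift_mk, aeval_X]; rfl
lemma phiL_y : phiL (yg 1) = (yg 3 * tg 3 ^ 2) ⊗ₜ[ℂ] (tg 3 ^ 2) := by
  unfold phiL yg; rw [lift_mk, aeval_X]; rfl
lemma phiL_t : phiL (tg 1) = (fg 3 ^ 3 * tg 3 ^ 2) ⊗ₜ[ℂ] (fg 3 ^ 4 * tg 3 ^ 2) := by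
  unfold phiL tg; rw [lift_mk, aeval_X]; rfl
lemma phiR_x : phiR (xg 1) = (tg 3 ^ 20) ⊗ₜ[ℂ] (xg 3 * tg 3 ^ 30) := by
  unfold phiR xg; rw [lift_mk, aeval_X]; rfl
lemma phiR_y : phiR (yg 1) = (tg 3 ^ 8) ⊗ₜ[ℂ] (yg 3 * tg 3 ^ 12) := by
  unfold phiR yg; rw [lift_mk, aeval_X]; rfl
lemma phiR_t : phiR (tg 1) = (fg 3 ^ 14 * tg 3 ^ 2) ⊗ₜ[ℂ] (fg 3 ^ 19) := by
  unfold phiR tg; rw [lift_mk, aeval_X]; rfl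
lemma psiL_x : psiL (xg 3) = (xg 1 * fg 1 ^ 285 * tg 1 ^ 200) ⊗ₜ[ℂ] (tg 1 ^ 50 * fg 1 ^ 35) := by
  unfold psiL xg; rw [lift_mk, aeval_X]; rfl
lemma psiL_y : psiL (yg 3) = (yg 1 * fg 1 ^ 114 * tg 1 ^ 80) ⊗ₜ[ℂ] (tg 1 ^ 20 * fg 1 ^ 14) := by
  unfold psiL yg; rw [lift_mk, aeval_X]; rfl
lemma psiL_t : psiL (tg 3) = (tg 1 ^ 57) ⊗ₜ[ℂ] (fg 1 ^ 10) := by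
  unfold psiL tg; rw [lift_mk, aeval_X]; rfl
lemma psiR_x : psiR (xg 3) = (fg 1 ^ 1140 * tg 1 ^ 1200) ⊗ₜ[ℂ] (xg 1 * tg 1 ^ 200 * fg 1 ^ 210) := by
  unfold psiR xg; rw [lift_mk, aeval_X]; rfl
lemma psiR_y : psiR (yg 3) = (fg 1 ^ 456 * tg 1 ^ 480) ⊗ₜ[ℂ] (yg 1 * tg 1 ^ 80 * fg 1 ^ 84) := by
  unfold psiR yg; rw [lift_mk, aeval_X]; rfl
lemma psiR_t : psiR (tg 3) = (fg 1 ^ 40) ⊗ₜ[ℂ] (tg 1 ^ 7) := by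
  unfold psiR tg; rw [lift_mk, aeval_X]; rfl

lemma phiL_f : phiL (fg 1) = (fg 3 * tg 3 ^ 10) ⊗ₜ[ℂ] (tg 3 ^ 10) := by
  show phiL (xg 1 ^ 2 + yg 1 ^ 5) = _
  rw [map_add, map_pow, map_pow, phiL_x, phiL_y, Algebra.TensorProduct.tmul_pow,
    Algebra.TensorProduct.tmul_pow,
    show ((tg 3 ^ 5 : SB) ^ 2) = tg 3 ^ 10 from by ring,
    show ((tg 3 ^ 2 : SB) ^ 5) = tg 3 ^ 10 from by ring,
    ← TensorProduct.add_tmul]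
  refine tmul_congr ?_ rfl
  have hfg : fg 3 = xg 3 ^ 2 + yg 3 ^ 5 := rfl
  linear_combination (tg 3 ^ 10) * hfg.symm

lemma phiR_f : phiR (fg 1) = (tg 3 ^ 40) ⊗ₜ[ℂ] (fg 3 * tg 3 ^ 60) := by
  show phiR (xg 1 ^ 2 + yg 1 ^ 5) = _
  rw [map_add, map_pow, map_pow, phiR_x, phiR_y, Algebra.TensorProduct.tmul_pow,
    Algebra.TensorProduct.tmul_pow,
    show ((tg 3 ^ 20 : SB) ^ 2) = tg 3 ^ 40 from by ring,
    show ((tg 3 ^ 8 : SB) ^ 5) = tg 3 ^ 40 from by ring,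
    ← TensorProduct.tmul_add]
  refine tmul_congr rfl ?_
  have hfg : fg 3 = xg 3 ^ 2 + yg 3 ^ 5 := rfl
  linear_combination (tg 3 ^ 60) * hfg.symm

lemma psiL_f : psiL (fg 3) = (fg 1 ^ 571 * tg 1 ^ 400) ⊗ₜ[ℂ] (tg 1 ^ 100 * fg 1 ^ 70) := by
  show psiL (xg 3 ^ 2 + yg 3 ^ 5) = _
  rw [map_add, map_pow, map_pow, psiL_x, psiL_y, Algebra.TensorProduct.tmul_pow,
    Algebra.TensorProduct.tmul_pow,
    show ((tg 1 ^ 50 * fg 1 ^ 35 : SA) ^ 2) = tg 1 ^ 100 * fg 1 ^ 70 from by ring,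
    show ((tg 1 ^ 20 * fg 1 ^ 14 : SA) ^ 5) = tg 1 ^ 100 * fg 1 ^ 70 from by ring,
    ← TensorProduct.add_tmul]
  refine tmul_congr ?_ rfl
  have hfg : fg 1 = xg 1 ^ 2 + yg 1 ^ 5 := rfl
  linear_combination (fg 1 ^ 570 * tg 1 ^ 400) * hfg.symm

lemma psiR_f : psiR (fg 3) = (fg 1 ^ 2280 * tg 1 ^ 2400) ⊗ₜ[ℂ] (fg 1 ^ 421 * tg 1 ^ 400) := by
  show psiR (xg 3 ^ 2 + yg 3 ^ 5) = _
  rw [map_add, map_pow, map_pow, psiR_x, psiR_y, Algebra.TensorProduct.tmul_pow,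
    Algebra.TensorProduct.tmul_pow,
    show ((fg 1 ^ 1140 * tg 1 ^ 1200 : SA) ^ 2) = fg 1 ^ 2280 * tg 1 ^ 2400 from by ring,
    show ((fg 1 ^ 456 * tg 1 ^ 480 : SA) ^ 5) = fg 1 ^ 2280 * tg 1 ^ 2400 from by ring,
    ← TensorProduct.tmul_add]
  refine tmul_congr rfl ?_
  have hfg : fg 1 = xg 1 ^ 2 + yg 1 ^ 5 := rfl
  linear_combination (tg 1 ^ 400 * fg 1 ^ 420) * hfg.symm


def Phi : DD →ₐ[ℂ] CC :=
  Algebra.TensorProduct.lift phiL phiR (fun x y => by exact Commute.all (phiL x) (phiR y))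
def Psi : CC →ₐ[ℂ] DD :=
  Algebra.TensorProduct.lift psiL psiR (fun x y => by exact Commute.all (psiL x) (psiR y))

lemma Phi_tmul (a b : SA) : Phi (a ⊗ₜ[ℂ] b) = phiL a * phiR b := by
  unfold Phi; rw [Algebra.TensorProduct.lift_tmul]
lemma Psi_tmul (a b : SB) : Psi (a ⊗ₜ[ℂ] b) = psiL a * psiR b := by
  unfold Psi; rw [Algebra.TensorProduct.lift_tmul]

lemma CC_mul_one (z : CC) : z * 1 = z := mul_one z
lemma CC_one_mul (z : CC) : 1 * z = z := one_mul z
lemma DD_mul_one (z : DD) : z * 1 = z := mul_one z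
lemma DD_one_mul (z : DD) : 1 * z = z := one_mul z

lemma Phi_left (a : SA) : Phi (a ⊗ₜ[ℂ] (1 : SA)) = phiL a := by
  rw [Phi_tmul, map_one, CC_mul_one]
lemma Phi_right (b : SA) : Phi ((1 : SA) ⊗ₜ[ℂ] b) = phiR b := by
  rw [Phi_tmul, map_one, CC_one_mul]
lemma Psi_left (a : SB) : Psi (a ⊗ₜ[ℂ] (1 : SB)) = psiL a := by
  rw [Psi_tmul, map_one, DD_mul_one]
lemma Psi_right (b : SB) : Psi ((1 : SB) ⊗ₜ[ℂ] b) = psiR b := by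
  rw [Psi_tmul, map_one, DD_one_mul]

lemma comp1 : Phi.comp Psi = AlgHom.id ℂ CC := by
  apply Algebra.TensorProduct.ext
  · apply Ideal.Quotient.algHom_ext
    apply MvPolynomial.algHom_ext
    intro i
    fin_cases i
    · show Phi (Psi ((xg 3) ⊗ₜ[ℂ] 1)) = (xg 3) ⊗ₜ[ℂ] 1
      simp only [Psi_left, Psi_right, Phi_left, Phi_right, Psi_tmul, Phi_tmul, map_one, one_mul, mul_one, CC_mul_one, CC_one_mul, DD_mul_one, DD_one_mul, map_mul, map_pow,
        psiL_x, psiL_y, psiL_t, psiL_f, psiR_x, psiR_y, psiR_t, psiR_f,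
        phiL_x, phiL_y, phiL_t, phiL_f, phiR_x, phiR_y, phiR_t, phiR_f,
        Algebra.TensorProduct.tmul_pow, Algebra.TensorProduct.tmul_mul_tmul]
      refine tmul_congr ?_ ?_
      · linear_combination (xg 3) * relpow 3 1585 4755 (by norm_num)
      · linear_combination relpow 3 1785 5355 (by norm_num)
    · show Phi (Psi ((yg 3) ⊗ₜ[ℂ] 1)) = (yg 3) ⊗ₜ[ℂ] 1
      simp only [Psi_left, Psi_right, Phi_left, Phi_right, Psi_tmul, Phi_tmul, map_one, one_mul, mul_one, CC_mul_one, CC_one_mul, DD_mul_one, DD_one_mul, map_mul, map_pow,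
        psiL_x, psiL_y, psiL_t, psiL_f, psiR_x, psiR_y, psiR_t, psiR_f,
        phiL_x, phiL_y, phiL_t, phiL_f, phiR_x, phiR_y, phiR_t, phiR_f,
        Algebra.TensorProduct.tmul_pow, Algebra.TensorProduct.tmul_mul_tmul]
      refine tmul_congr ?_ ?_
      · linear_combination (yg 3) * relpow 3 634 1902 (by norm_num)
      · linear_combination relpow 3 714 2142 (by norm_num)
    · show Phi (Psi ((tg 3) ⊗ₜ[ℂ] 1)) = (tg 3) ⊗ₜ[ℂ] 1
      simp only [Psi_left, Psi_right, Phi_left, Phi_right, Psi_tmul, Phi_tmul, map_one, one_mul, mul_one, CC_mul_one, CC_one_mul, DD_mul_one, DD_one_mul, map_mul, map_pow,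
        psiL_x, psiL_y, psiL_t, psiL_f, psiR_x, psiR_y, psiR_t, psiR_f,
        phiL_x, phiL_y, phiL_t, phiL_f, phiR_x, phiR_y, phiR_t, phiR_f,
        Algebra.TensorProduct.tmul_pow, Algebra.TensorProduct.tmul_mul_tmul]
      refine tmul_congr ?_ ?_
      · linear_combination (tg 3) * relpow 3 171 513 (by norm_num)
      · linear_combination relpow 3 238 714 (by norm_num)
  · apply Ideal.Quotient.algHom_ext
    apply MvPolynomial.algHom_ext
    intro i
    fin_cases i
    · show Phi (Psi ((1 : SB) ⊗ₜ[ℂ] (xg 3))) = (1 : SB) ⊗ₜ[ℂ] (xg 3)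
      simp only [Psi_left, Psi_right, Phi_left, Phi_right, Psi_tmul, Phi_tmul, map_one, one_mul, mul_one, CC_mul_one, CC_one_mul, DD_mul_one, DD_one_mul, map_mul, map_pow,
        psiL_x, psiL_y, psiL_t, psiL_f, psiR_x, psiR_y, psiR_t, psiR_f,
        phiL_x, phiL_y, phiL_t, phiL_f, phiR_x, phiR_y, phiR_t, phiR_f,
        Algebra.TensorProduct.tmul_pow, Algebra.TensorProduct.tmul_mul_tmul]
      refine tmul_congr ?_ ?_
      · linear_combination relpow 3 7540 22620 (by norm_num)
      · linear_combination (xg 3 * relpow 3 8810 26430 (by norm_num))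
    · show Phi (Psi ((1 : SB) ⊗ₜ[ℂ] (yg 3))) = (1 : SB) ⊗ₜ[ℂ] (yg 3)
      simp only [Psi_left, Psi_right, Phi_left, Phi_right, Psi_tmul, Phi_tmul, map_one, one_mul, mul_one, CC_mul_one, CC_one_mul, DD_mul_one, DD_one_mul, map_mul, map_pow,
        psiL_x, psiL_y, psiL_t, psiL_f, psiR_x, psiR_y, psiR_t, psiR_f,
        phiL_x, phiL_y, phiL_t, phiL_f, phiR_x, phiR_y, phiR_t, phiR_f,
        Algebra.TensorProduct.tmul_pow, Algebra.TensorProduct.tmul_mul_tmul]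
      refine tmul_congr ?_ ?_
      · linear_combination relpow 3 3016 9048 (by norm_num)
      · linear_combination (yg 3 * relpow 3 3524 10572 (by norm_num))
    · show Phi (Psi ((1 : SB) ⊗ₜ[ℂ] (tg 3))) = (1 : SB) ⊗ₜ[ℂ] (tg 3)
      simp only [Psi_left, Psi_right, Phi_left, Phi_right, Psi_tmul, Phi_tmul, map_one, one_mul, mul_one, CC_mul_one, CC_one_mul, DD_mul_one, DD_one_mul, map_mul, map_pow,
        psiL_x, psiL_y, psiL_t, psiL_f, psiR_x, psiR_y, psiR_t, psiR_f,
        phiL_x, phiL_y, phiL_t, phiL_f, phiR_x, phiR_y, phiR_t, phiR_f,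
        Algebra.TensorProduct.tmul_pow, Algebra.TensorProduct.tmul_mul_tmul]
      refine tmul_congr ?_ ?_
      · linear_combination relpow 3 138 414 (by norm_num)
      · linear_combination (tg 3 * relpow 3 133 399 (by norm_num))

lemma comp2 : Psi.comp Phi = AlgHom.id ℂ DD := by
  apply Algebra.TensorProduct.ext
  · apply Ideal.Quotient.algHom_ext
    apply MvPolynomial.algHom_ext
    intro i
    fin_cases i
    · show Psi (Phi ((xg 1) ⊗ₜ[ℂ] 1)) = (xg 1) ⊗ₜ[ℂ] 1
      simp only [Psi_left, Psi_right, Phi_left, Phi_right, Psi_tmul, Phi_tmul, map_one, one_mul, mul_one, CC_mul_one, CC_one_mul, DD_mul_one, DD_one_mul, map_mul, map_pow,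
        psiL_x, psiL_y, psiL_t, psiL_f, psiR_x, psiR_y, psiR_t, psiR_f,
        phiL_x, phiL_y, phiL_t, phiL_f, phiR_x, phiR_y, phiR_t, phiR_f,
        Algebra.TensorProduct.tmul_pow, Algebra.TensorProduct.tmul_mul_tmul]
      refine tmul_congr ?_ ?_
      · linear_combination (xg 1) * relpow 1 485 485 (by norm_num)
      · linear_combination relpow 1 85 85 (by norm_num)
    · show Psi (Phi ((yg 1) ⊗ₜ[ℂ] 1)) = (yg 1) ⊗ₜ[ℂ] 1
      simp only [Psi_left, Psi_right, Phi_left, Phi_right, Psi_tmul, Phi_tmul, map_one, one_mul, mul_one, CC_mul_one, CC_one_mul, DD_mul_one, DD_one_mul, map_mul, map_pow,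
        psiL_x, psiL_y, psiL_t, psiL_f, psiR_x, psiR_y, psiR_t, psiR_f,
        phiL_x, phiL_y, phiL_t, phiL_f, phiR_x, phiR_y, phiR_t, phiR_f,
        Algebra.TensorProduct.tmul_pow, Algebra.TensorProduct.tmul_mul_tmul]
      refine tmul_congr ?_ ?_
      · linear_combination (yg 1) * relpow 1 194 194 (by norm_num)
      · linear_combination relpow 1 34 34 (by norm_num)
    · show Psi (Phi ((tg 1) ⊗ₜ[ℂ] 1)) = (tg 1) ⊗ₜ[ℂ] 1
      simp only [Psi_left, Psi_right, Phi_left, Phi_right, Psi_tmul, Phi_tmul, map_one, one_mul, mul_one, CC_mul_one, CC_one_mul, DD_mul_one, DD_one_mul, map_mul, map_pow,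
        psiL_x, psiL_y, psiL_t, psiL_f, psiR_x, psiR_y, psiR_t, psiR_f,
        phiL_x, phiL_y, phiL_t, phiL_f, phiR_x, phiR_y, phiR_t, phiR_f,
        Algebra.TensorProduct.tmul_pow, Algebra.TensorProduct.tmul_mul_tmul]
      refine tmul_congr ?_ ?_
      · linear_combination (tg 1) * relpow 1 10913 10913 (by norm_num)
      · linear_combination relpow 1 1914 1914 (by norm_num)
  · apply Ideal.Quotient.algHom_ext
    apply MvPolynomial.algHom_ext
    intro i
    fin_cases i
    · show Psi (Phi ((1 : SA) ⊗ₜ[ℂ] (xg 1))) = (1 : SA) ⊗ₜ[ℂ] (xg 1)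
      simp only [Psi_left, Psi_right, Phi_left, Phi_right, Psi_tmul, Phi_tmul, map_one, one_mul, mul_one, CC_mul_one, CC_one_mul, DD_mul_one, DD_one_mul, map_mul, map_pow,
        psiL_x, psiL_y, psiL_t, psiL_f, psiR_x, psiR_y, psiR_t, psiR_f,
        phiL_x, phiL_y, phiL_t, phiL_f, phiR_x, phiR_y, phiR_t, phiR_f,
        Algebra.TensorProduct.tmul_pow, Algebra.TensorProduct.tmul_mul_tmul]
      refine tmul_congr ?_ ?_
      · linear_combination relpow 1 2340 2340 (by norm_num)
      · linear_combination (xg 1 * relpow 1 410 410 (by norm_num))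
    · show Psi (Phi ((1 : SA) ⊗ₜ[ℂ] (yg 1))) = (1 : SA) ⊗ₜ[ℂ] (yg 1)
      simp only [Psi_left, Psi_right, Phi_left, Phi_right, Psi_tmul, Phi_tmul, map_one, one_mul, mul_one, CC_mul_one, CC_one_mul, DD_mul_one, DD_one_mul, map_mul, map_pow,
        psiL_x, psiL_y, psiL_t, psiL_f, psiR_x, psiR_y, psiR_t, psiR_f,
        phiL_x, phiL_y, phiL_t, phiL_f, phiR_x, phiR_y, phiR_t, phiR_f,
        Algebra.TensorProduct.tmul_pow, Algebra.TensorProduct.tmul_mul_tmul]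
      refine tmul_congr ?_ ?_
      · linear_combination relpow 1 936 936 (by norm_num)
      · linear_combination (yg 1 * relpow 1 164 164 (by norm_num))
    · show Psi (Phi ((1 : SA) ⊗ₜ[ℂ] (tg 1))) = (1 : SA) ⊗ₜ[ℂ] (tg 1)
      simp only [Psi_left, Psi_right, Phi_left, Phi_right, Psi_tmul, Phi_tmul, map_one, one_mul, mul_one, CC_mul_one, CC_one_mul, DD_mul_one, DD_one_mul, map_mul, map_pow,
        psiL_x, psiL_y, psiL_t, psiL_f, psiR_x, psiR_y, psiR_t, psiR_f,
        phiL_x, phiL_y, phiL_t, phiL_f, phiR_x, phiR_y, phiR_t, phiR_f,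
        Algebra.TensorProduct.tmul_pow, Algebra.TensorProduct.tmul_mul_tmul]
      refine tmul_congr ?_ ?_
      · linear_combination relpow 1 51314 51314 (by norm_num)
      · linear_combination (tg 1 * relpow 1 8999 8999 (by norm_num))

end

end Case25Aux

/-- **Proposition (surfaces with isomorphic squares).** The squares `X₁ × X₁` and
`X₃ × X₃` of the (nonisomorphic) surfaces `X₁ = {t(x² + y⁵) = 1}` and
`X₃ = {t³(x² + y⁵) = 1}` are isomorphic: the `ℂ`-algebras `A₁ ⊗_ℂ A₁` and
`A₃ ⊗_ℂ A₃` are isomorphic. -/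
theorem case25_squares_iso :
    Nonempty ((surfaceRing25 1 ⊗[ℂ] surfaceRing25 1) ≃ₐ[ℂ]
      (surfaceRing25 3 ⊗[ℂ] surfaceRing25 3)) := by
  exact ⟨AlgEquiv.ofAlgHom Case25Aux.Phi Case25Aux.Psi Case25Aux.comp1 Case25Aux.comp2⟩
end
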